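/- Let Y be a normed vector space, C ⊆ Y a closed convex cone, S ⊆ Y a nonempty set with S ⊄ C, and r > 0. Then the excess of S + r𝔹 over C satisfies e(S + r𝔹, C) = e(S,C) + r, where 𝔹 is the closed unit ball of Y. -/

import Mathlib

open Set Metric
open scoped ENNReal Pointwise

/-- Excess of `A` over `C`: `e(A,C) = sup_{a ∈ A} dist(a,C)`. -/
noncomputable def exc {Y : Type*} [PseudoEMetricSpace Y] (A C : Set Y) : ℝ≥0∞ :=
  ⨆ y ∈ A, EMetric.infEdist y C

private lemma exists_good_point
    {Y : Type*} [NormedAddCommGroup Y] [NormedSpace ℝ Y]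
    (C : Set Y) (hCconv : Convex ℝ C)
    (hCcone : ∀ t : ℝ, 0 < t → ∀ y ∈ C, t • y ∈ C)
    (hC0 : (0:Y) ∈ C) (s : Y) (d : ℝ) (hd : 0 < d)
    (hdisj : Disjoint (ball s d) C)
    (r ε : ℝ) (hr : 0 < r) (hε : 0 < ε) :
    ∃ b : Y, ‖b‖ ≤ 1 ∧ d + r - ε ≤ Metric.infDist (s + r • b) C := by
  obtain ⟨f, u, hfball, hfC⟩ :=
    geometric_hahn_banach_open (convex_ball s d) isOpen_ball hCconv hdisj
  have hu0 : u ≤ 0 := by simpa using hfC 0 hC0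
  have hfCpos : ∀ c ∈ C, 0 ≤ f c := by
    intro c hc
    by_contra hneg
    push_neg at hneg
    have ht : 0 < (u - 1) / f c := div_pos_of_neg_of_neg (by linarith) hneg
    have := hfC _ (hCcone _ ht c hc)
    rw [map_smul, smul_eq_mul, div_mul_cancel₀ _ hneg.ne] at this
    linarith
  have hss : f s < u := hfball s (mem_ball_self hd)
  have hgs0 : 0 < -f s := by linarith
  have hkey : ∀ w : Y, ‖w‖ < 1 → d * f w < -f s := by
    intro w hw
    have hmem : s + d • w ∈ ball s d := by
      rw [mem_ball, dist_self_add_left, norm_smul, Real.norm_of_nonneg hd.le]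
      calc d * ‖w‖ < d * 1 := by exact mul_lt_mul_of_pos_left hw hd
        _ = d := mul_one d
    have := hfball _ hmem
    simp only [map_add, map_smul, smul_eq_mul] at this
    linarith
  have hfne : f ≠ 0 := by
    intro h
    rw [h] at hss
    simp at hss
    linarith
  have hfpos : 0 < ‖f‖ := by
    rw [norm_pos_iff]; exact hfne
  have hnorm : d * ‖f‖ ≤ -f s := by
    by_contra hcon
    push_neg at hcon
    have hlt : (-f s) / d < ‖f‖ := (div_lt_iff₀' hd).mpr hcon
    obtain ⟨x, hx1, hx2⟩ := f.exists_lt_apply_of_lt_opNorm hlt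
    rw [div_lt_iff₀ hd, mul_comm] at hx2
    rcases le_or_gt (f x) 0 with hfx | hfx
    · have := hkey (-x) (by simpa using hx1)
      rw [map_neg] at this
      rw [Real.norm_eq_abs, abs_of_nonpos hfx] at hx2
      nlinarith
    · have := hkey x hx1
      rw [Real.norm_eq_abs, abs_of_pos hfx] at hx2
      linarith
  -- normalized functional
  set h : Y →L[ℝ] ℝ := -(‖f‖⁻¹ • f) with hh
  have hhnorm : ‖h‖ = 1 := by
    rw [hh, norm_neg, norm_smul ‖f‖⁻¹ f, norm_inv, norm_norm, inv_mul_cancel₀ hfpos.ne']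
  have hhC : ∀ c ∈ C, h c ≤ 0 := by
    intro c hc
    simp only [hh, ContinuousLinearMap.neg_apply, ContinuousLinearMap.smul_apply, smul_eq_mul]
    have := hfCpos c hc
    have : 0 ≤ ‖f‖⁻¹ * f c := mul_nonneg (inv_nonneg.mpr hfpos.le) this
    linarith
  have hhs : d ≤ h s := by
    simp only [hh, ContinuousLinearMap.neg_apply, ContinuousLinearMap.smul_apply, smul_eq_mul]
    have h1 : ‖f‖⁻¹ * (d * ‖f‖) ≤ ‖f‖⁻¹ * (-f s) :=
      mul_le_mul_of_nonneg_left hnorm (inv_nonneg.mpr hfpos.le)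
    have h2 : ‖f‖⁻¹ * (d * ‖f‖) = d := by field_simp
    rw [h2] at h1
    linarith
  -- choose b with h b close to 1
  have hlt1 : 1 - ε / r < ‖h‖ := by
    rw [hhnorm]
    have : 0 < ε / r := div_pos hε hr
    linarith
  obtain ⟨x, hx1, hx2⟩ := h.exists_lt_apply_of_lt_opNorm hlt1
  set b : Y := if 0 ≤ h x then x else -x with hb
  have hb1 : ‖b‖ ≤ 1 := by
    rw [hb]; split_ifs <;> simp [le_of_lt hx1]
  have hbval : 1 - ε / r < h b := by
    rw [hb]; split_ifs with h'
    · rwa [Real.norm_eq_abs, abs_of_nonneg h'] at hx2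
    · push_neg at h'
      rw [Real.norm_eq_abs, abs_of_neg h'] at hx2
      rw [map_neg]; linarith
  refine ⟨b, hb1, ?_⟩
  by_contra hcon
  push_neg at hcon
  obtain ⟨c, hc, hdist⟩ := (infDist_lt_iff ⟨0, hC0⟩).mp hcon
  have hbound : h (s + r • b) - h c ≤ dist (s + r • b) c := by
    calc h (s + r • b) - h c = h (s + r • b - c) := by rw [map_sub]
      _ ≤ ‖h (s + r • b - c)‖ := (le_abs_self _).trans_eq (Real.norm_eq_abs _).symm
      _ ≤ ‖h‖ * ‖s + r • b - c‖ := h.le_opNorm _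
      _ = dist (s + r • b) c := by rw [hhnorm, one_mul, dist_eq_norm]
  have hhy : d + r - ε ≤ h (s + r • b) := by
    rw [map_add, map_smul, smul_eq_mul]
    have : r * (1 - ε / r) < r * h b := mul_lt_mul_of_pos_left hbval hr
    rw [mul_sub, mul_one, mul_div_cancel₀ _ hr.ne'] at this
    linarith
  have := hhC c hc
  linarith

/-- For a closed convex cone `C`, a nonempty set `S ⊄ C` and `r > 0`,
`e(S + r𝔹, C) = e(S,C) + r`. -/
theorem excess_add_ball_of_not_subset
    {Y : Type*} [NormedAddCommGroup Y] [NormedSpace ℝ Y]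
    (C : Set Y) (hCclosed : IsClosed C) (hCconv : Convex ℝ C)
    (hCcone : ∀ t : ℝ, 0 < t → ∀ y ∈ C, t • y ∈ C)
    (S : Set Y) (hSne : S.Nonempty) (hSC : ¬ S ⊆ C)
    (r : ℝ) (hr : 0 < r) :
    exc (S + r • closedBall (0:Y) 1) C = exc S C + ENNReal.ofReal r := by
  obtain ⟨s₀, hs₀⟩ := hSne
  rcases C.eq_empty_or_nonempty with rfl | hCne
  · have key : ∀ (A : Set Y), A.Nonempty → exc A (∅ : Set Y) = ⊤ := by
      rintro A ⟨a, ha⟩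
      refine top_unique ?_
      have : EMetric.infEdist a (∅ : Set Y) = ⊤ := EMetric.infEdist_empty
      calc (⊤ : ℝ≥0∞) = EMetric.infEdist a (∅ : Set Y) := this.symm
        _ ≤ exc A ∅ := le_iSup₂ (f := fun y _ => EMetric.infEdist y (∅ : Set Y)) a ha
    rw [key S ⟨s₀, hs₀⟩, key _ ⟨s₀ + r • 0, add_mem_add hs₀
      (smul_mem_smul_set (mem_closedBall_self zero_le_one))⟩]
    simp
  have hC0 : (0:Y) ∈ C := by
    obtain ⟨c, hc⟩ := hCne
    have htend : Filter.Tendsto (fun n : ℕ => (1/(n+1) : ℝ) • c) Filter.atTop (nhds 0) := by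
      have h1 := tendsto_one_div_add_atTop_nhds_zero_nat (𝕜 := ℝ)
      simpa using h1.smul_const c
    exact hCclosed.mem_of_tendsto htend
      (Filter.Eventually.of_forall fun n => hCcone _ (by positivity) c hc)
  apply le_antisymm
  · -- upper bound
    refine iSup₂_le fun y hy => ?_
    rw [Set.mem_add] at hy
    obtain ⟨s, hs, w, hw, rfl⟩ := hy
    obtain ⟨b, hb, rfl⟩ := hw
    rw [mem_closedBall_zero_iff] at hb
    calc EMetric.infEdist (s + r • b) C
        ≤ EMetric.infEdist s C + edist (s + r • b) s :=
          EMetric.infEdist_le_infEdist_add_edist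
      _ ≤ exc S C + ENNReal.ofReal r := by
          refine add_le_add (le_iSup₂ (f := fun y _ => EMetric.infEdist y C) s hs) ?_
          rw [edist_dist, dist_self_add_left, norm_smul, Real.norm_of_nonneg hr.le]
          exact ENNReal.ofReal_le_ofReal (by nlinarith)
  · -- lower bound
    obtain ⟨s₁, hs₁S, hs₁C⟩ := not_subset.mp hSC
    have hrw : exc S C = ⨆ s ∈ S \ C, EMetric.infEdist s C := by
      apply le_antisymm
      · refine iSup₂_le fun s hs => ?_
        by_cases h : s ∈ C
        · exact (EMetric.infEdist_zero_of_mem h).trans_le (zero_le)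
        · exact le_iSup₂ (f := fun y _ => EMetric.infEdist y C) s ⟨hs, h⟩
      · exact iSup₂_le fun s hs =>
          le_iSup₂ (f := fun y _ => EMetric.infEdist y C) s hs.1
    rw [hrw, iSup_subtype']
    haveI : Nonempty (S \ C : Set Y) := ⟨⟨s₁, hs₁S, hs₁C⟩⟩
    rw [ENNReal.iSup_add]
    refine iSup_le fun ⟨s, hsS, hsC⟩ => ?_
    set d := Metric.infDist s C with hdd
    have hdpos : 0 < d := (hCclosed.notMem_iff_infDist_pos hCne).mp hsC
    have hie : EMetric.infEdist s C = ENNReal.ofReal d := by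
      rw [hdd, Metric.infDist, ENNReal.ofReal_toReal (Metric.infEdist_ne_top hCne)]
      rfl
    simp only
    rw [hie, ← ENNReal.ofReal_add hdpos.le hr.le]
    refine ENNReal.le_of_forall_pos_le_add fun ε hε _ => ?_
    have hεpos : (0:ℝ) < ε := hε
    have hdisj : Disjoint (ball s d) C := by
      rw [Set.disjoint_left]
      intro x hx hxC
      have h1 : d ≤ dist s x := Metric.infDist_le_dist_of_mem hxC
      rw [mem_ball, dist_comm] at hx
      linarith
    obtain ⟨b, hb1, hbd⟩ := exists_good_point C hCconv hCcone hC0 s d hdpos hdisj r ε hr hεpos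
    have hymem : s + r • b ∈ S + r • closedBall (0:Y) 1 :=
      add_mem_add hsS (smul_mem_smul_set (mem_closedBall_zero_iff.mpr hb1))
    calc ENNReal.ofReal (d + r)
        ≤ ENNReal.ofReal (Metric.infDist (s + r • b) C + ε) :=
          ENNReal.ofReal_le_ofReal (by linarith)
      _ = ENNReal.ofReal (Metric.infDist (s + r • b) C) + ENNReal.ofReal ε :=
          ENNReal.ofReal_add Metric.infDist_nonneg hεpos.le
      _ ≤ exc (S + r • closedBall (0:Y) 1) C + (ε : ℝ≥0∞) := by
          refine add_le_add ?_ (by rw [ENNReal.ofReal_coe_nnreal])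
          rw [Metric.infDist, ENNReal.ofReal_toReal (Metric.infEdist_ne_top hCne)]
          exact le_iSup₂ (f := fun y _ => EMetric.infEdist y C) _ hymem
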